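/- Let (X,d) be a metric space and μ a Borel probability measure on X. Then for every open set E ⊆ X, the perimeter of E is at most its outer Minkowski content: P(E) ≤ μ⁺(E). -/

import Mathlib

open Filter MeasureTheory Set Metric Topology ENNReal

/-- The slope (local Lipschitz constant) of `u` at `x`:
`|∇u|(x) = limsup_{y→x} |u(x)-u(y)|/d(x,y)`, interpreted as `0` when `x` is isolated. -/
noncomputable def slopeAt {X : Type*} [MetricSpace X] (u : X → ℝ) (x : X) : ℝ :=
  Filter.limsup (fun y => |u x - u y| / dist x y) (𝓝[≠] x)

/-- The perimeter of a set `E` in a metric measure space: the infimum of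
`liminf_n ∫ |∇u_n| dμ` over sequences of Lipschitz functions converging to `χ_E` in `L¹(μ)`. -/
noncomputable def perimeter {X : Type*} [MetricSpace X] [MeasurableSpace X]
    (μ : Measure X) (E : Set X) : ℝ≥0∞ :=
  sInf { p : ℝ≥0∞ | ∃ u : ℕ → X → ℝ,
    (∀ n, ∃ K : NNReal, LipschitzWith K (u n)) ∧
    Filter.Tendsto
      (fun n => ∫⁻ x, ENNReal.ofReal |u n x - E.indicator (fun _ => (1:ℝ)) x| ∂μ)
      atTop (𝓝 0) ∧
    p = Filter.liminf (fun n => ∫⁻ x, ENNReal.ofReal (slopeAt (u n) x) ∂μ) atTop }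

/-- The outer Minkowski content of `E`:
`μ⁺(E) = liminf_{ε↓0} (μ(E^ε) - μ(E))/ε`, where `E^ε = {x : d(x,E) ≤ ε}`. -/
noncomputable def minkContent {X : Type*} [MetricSpace X] [MeasurableSpace X]
    (μ : Measure X) (E : Set X) : ℝ≥0∞ :=
  Filter.liminf (fun ε : ℝ => (μ (Metric.cthickening ε E) - μ E) / ENNReal.ofReal ε) (𝓝[>] 0)

/-- Perimeter computed in a metric measure subspace `(S, Euclidean distance, μ)` of `ℝ`. -/
noncomputable def perimeterOn (S : Set ℝ) (μ : Measure ℝ) (E : Set ℝ) : ℝ≥0∞ :=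
  perimeter (Measure.comap (Subtype.val : S → ℝ) μ) ((Subtype.val : S → ℝ) ⁻¹' E)

/-- Outer Minkowski content computed in a metric measure subspace `(S, Euclidean distance, μ)`. -/
noncomputable def minkOn (S : Set ℝ) (μ : Measure ℝ) (E : Set ℝ) : ℝ≥0∞ :=
  minkContent (Measure.comap (Subtype.val : S → ℝ) μ) ((Subtype.val : S → ℝ) ⁻¹' E)

/-- The measure `h · L¹` on `ℝ`. -/
noncomputable def densMeasure (h : ℝ → ℝ) : Measure ℝ :=
  (volume : Measure ℝ).withDensity (fun t => ENNReal.ofReal (h t))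

/-- The distortion coefficients `σ^{(t)}_{K,N'}(θ)`. -/
noncomputable def sigmaCoef (K N' : ℝ) (t θ : ℝ) : ℝ≥0∞ :=
  if N' * Real.pi ^ 2 ≤ K * θ ^ 2 then ∞
  else if 0 < K * θ ^ 2 then
    ENNReal.ofReal (Real.sin (t * θ * Real.sqrt (K / N')) / Real.sin (θ * Real.sqrt (K / N')))
  else if K * θ ^ 2 = 0 ∨ N' = 0 then ENNReal.ofReal t
  else
    ENNReal.ofReal (Real.sinh (t * θ * Real.sqrt (-K / N')) / Real.sinh (θ * Real.sqrt (-K / N')))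

/-- The `CD(K,N)` concavity-type condition for a one-dimensional density `h` on a set `S`:
`h((1-s)t₀+st₁)^{1/(N-1)} ≥ σ^{(1-s)}_{K,N-1}(t₁-t₀) h(t₀)^{1/(N-1)} + σ^{(s)}_{K,N-1}(t₁-t₀) h(t₁)^{1/(N-1)}`. -/
def CDDensity (K N : ℝ) (S : Set ℝ) (h : ℝ → ℝ) : Prop :=
  ∀ s ∈ Set.Icc (0:ℝ) 1, ∀ t₀ ∈ S, ∀ t₁ ∈ S, t₀ < t₁ →
    sigmaCoef K (N - 1) (1 - s) (t₁ - t₀) * ENNReal.ofReal (h t₀ ^ (1 / (N - 1))) +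
        sigmaCoef K (N - 1) s (t₁ - t₀) * ENNReal.ofReal (h t₁ ^ (1 / (N - 1)))
      ≤ ENNReal.ofReal (h ((1 - s) * t₀ + s * t₁) ^ (1 / (N - 1)))

/-- Membership in the family `F^s_{K,N,D}` of synthetic `CD(K,N)` probability densities
supported in `[0,D]`. -/
def memSynthF (K N D : ℝ) (h : ℝ → ℝ) : Prop :=
  (∀ t, 0 ≤ h t) ∧
  Function.support h ⊆ Set.Icc 0 D ∧
  IsProbabilityMeasure (densMeasure h) ∧
  (1 < N → Continuous h ∧ CDDensity K N (closure (Function.support h)) h) ∧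
  (N = 1 → ∀ t₀ ∈ closure (Function.support h), ∀ t₁ ∈ closure (Function.support h),
     h t₀ = h t₁)

section Aux

variable {X : Type*} [MetricSpace X]

private lemma limsup_bot_real {α : Type*} (f : α → ℝ) : Filter.limsup f (⊥ : Filter α) = 0 := by
  simp only [Filter.limsup, Filter.limsSup, Filter.map_bot]
  have : {a : ℝ | ∀ᶠ n in (⊥ : Filter ℝ), n ≤ a} = Set.univ := by simp
  rw [this]
  exact Real.sInf_of_not_bddBelow (by simpa using not_bddBelow_univ)

private lemma slopeAt_le_of_lip {u : X → ℝ} {C : ℝ}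
    (hC : 0 ≤ C) (h : ∀ x y, |u x - u y| ≤ C * dist x y) (x : X) : slopeAt u x ≤ C := by
  rcases eq_or_neBot (𝓝[≠] x) with hb | hb
  · rw [slopeAt, hb, limsup_bot_real]; exact hC
  · refine limsup_le_of_le
      (isCoboundedUnder_le_of_le _ (fun y => div_nonneg (abs_nonneg _) dist_nonneg)) ?_
    filter_upwards [self_mem_nhdsWithin] with y hy
    have hd : 0 < dist x y := dist_pos.2 (Ne.symm hy)
    rw [div_le_iff₀ hd]
    exact h x y

private lemma slopeAt_le_zero_of_const {u : X → ℝ} {x : X} {s : Set X}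
    (hs : s ∈ 𝓝 x) (hc : ∀ y ∈ s, u y = u x) : slopeAt u x ≤ 0 := by
  rcases eq_or_neBot (𝓝[≠] x) with hb | hb
  · rw [slopeAt, hb, limsup_bot_real]
  · refine limsup_le_of_le
      (isCoboundedUnder_le_of_le _ (fun y => div_nonneg (abs_nonneg _) dist_nonneg)) ?_
    filter_upwards [nhdsWithin_le_nhds hs] with y hy
    rw [hc y hy, sub_self, abs_zero, zero_div]

/-- The cutoff function `x ↦ max 0 (1 - ε⁻¹ d(x,E))`. -/
private noncomputable def cutoff (ε : ℝ) (E : Set X) (x : X) : ℝ :=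
  max 0 (1 - ε⁻¹ * infDist x E)

private lemma cutoff_lip {ε : ℝ} (hε : 0 < ε) (E : Set X) (x y : X) :
    |cutoff ε E x - cutoff ε E y| ≤ ε⁻¹ * dist x y := by
  have h1 : |cutoff ε E x - cutoff ε E y|
      ≤ |(1 - ε⁻¹ * infDist x E) - (1 - ε⁻¹ * infDist y E)| := by
    simpa [cutoff, max_comm] using
      abs_max_sub_max_le_abs (1 - ε⁻¹ * infDist x E) (1 - ε⁻¹ * infDist y E) 0
  refine h1.trans ?_
  have h2 : (1 - ε⁻¹ * infDist x E) - (1 - ε⁻¹ * infDist y E)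
      = ε⁻¹ * (infDist y E - infDist x E) := by ring
  rw [h2, abs_mul, abs_of_pos (inv_pos.2 hε)]
  have h3 := (lipschitz_infDist_pt E).dist_le_mul y x
  rw [Real.dist_eq, NNReal.coe_one, one_mul, dist_comm] at h3
  exact mul_le_mul_of_nonneg_left h3 (inv_pos.2 hε).le

private lemma cutoff_mem {ε : ℝ} (hε : 0 < ε) (E : Set X) (x : X) :
    cutoff ε E x ∈ Icc (0:ℝ) 1 := by
  refine ⟨le_max_left _ _, max_le zero_le_one ?_⟩
  have : 0 ≤ ε⁻¹ * infDist x E := mul_nonneg (inv_pos.2 hε).le infDist_nonneg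
  linarith

private lemma cutoff_eq_one {ε : ℝ} {E : Set X} {x : X} (hx : x ∈ E) :
    cutoff ε E x = 1 := by
  rw [cutoff, infDist_zero_of_mem hx, mul_zero, sub_zero, max_eq_right zero_le_one]

private lemma cutoff_eq_zero {ε : ℝ} (hε : 0 < ε) {E : Set X} {x : X}
    (hx : ε < infDist x E) : cutoff ε E x = 0 := by
  rw [cutoff, max_eq_left]
  have : 1 < ε⁻¹ * infDist x E := by
    rw [inv_mul_eq_div, lt_div_iff₀ hε, one_mul]; exact hx
  linarith

private lemma lt_infDist_of_not_mem_cthickening {ε : ℝ} (hε : 0 ≤ ε) {E : Set X}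
    (hne : E.Nonempty) {x : X} (hx : x ∉ cthickening ε E) : ε < infDist x E := by
  rw [mem_cthickening_iff, not_le] at hx
  have h1 : (ENNReal.ofReal ε).toReal < (EMetric.infEdist x E).toReal :=
    ENNReal.toReal_strict_mono (infEdist_ne_top hne) hx
  rw [ENNReal.toReal_ofReal hε] at h1
  have h2 : infDist x E = (EMetric.infEdist x E).toReal := rfl
  rwa [h2]

end Aux

/-- For a Borel probability measure on a metric space and any open set `E`,
the perimeter of `E` is at most its outer Minkowski content. -/
theorem perimeter_le_minkContent {X : Type*} [MetricSpace X] [MeasurableSpace X] [BorelSpace X]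
    (μ : Measure X) [IsProbabilityMeasure μ] (E : Set X) (hE : IsOpen E) :
    perimeter μ E ≤ minkContent μ E := by
  -- dispose of the empty case
  rcases E.eq_empty_or_nonempty with rfl | hne
  · refine le_trans (sInf_le ?_) zero_le
    refine ⟨fun _ _ => 0, fun n => ⟨0, LipschitzWith.const' 0⟩, by simpa using tendsto_const_nhds, ?_⟩
    have hs : ∀ x : X, ENNReal.ofReal (slopeAt (fun _ : X => (0:ℝ)) x) = 0 := by
      intro x
      exact ENNReal.ofReal_eq_zero.2 (slopeAt_le_zero_of_const univ_mem (fun _ _ => rfl))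
    simp only [hs, lintegral_zero]
    simp
  set L := minkContent μ E with hL
  rcases eq_top_or_lt_top L with h | hLlt
  · rw [h]; exact le_top
  refine ENNReal.le_of_forall_pos_le_add fun δ hδ _ => ?_
  set f : ℝ → ℝ≥0∞ := fun ε => (μ (cthickening ε E) - μ E) / ENNReal.ofReal ε with hf
  have hfreq : ∃ᶠ ε in 𝓝[>] (0:ℝ), f ε < L + δ :=
    frequently_lt_of_liminf_lt
      (h := ENNReal.lt_add_right hLlt.ne (ENNReal.coe_ne_zero.2 hδ.ne'))
  have hchoice : ∀ n : ℕ, ∃ ε : ℝ, (ε ∈ Ioo (0:ℝ) (1/((n:ℝ)+1))) ∧ f ε < L + δ := by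
    intro n
    have hmem : Ioo (0:ℝ) (1/((n:ℝ)+1)) ∈ 𝓝[>] (0:ℝ) :=
      Ioo_mem_nhdsGT_of_mem ⟨le_rfl, by positivity⟩
    obtain ⟨ε, h1, h2⟩ := (hfreq.and_eventually (eventually_of_mem hmem (fun x hx => hx))).exists
    exact ⟨ε, h2, h1⟩
  choose εs hεs hfεs using hchoice
  have hεpos : ∀ n, 0 < εs n := fun n => (hεs n).1
  set D : ℕ → Set X := fun n => cthickening (εs n) E \ E with hD
  have hDmeas : ∀ n, MeasurableSet (D n) :=
    fun n => (isClosed_cthickening.measurableSet).diff hE.measurableSet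
  have hDval : ∀ n, μ (D n) = μ (cthickening (εs n) E) - μ E := fun n =>
    measure_diff (self_subset_cthickening E) hE.measurableSet.nullMeasurableSet
      (measure_ne_top μ E)
  have hDle : ∀ n, μ (D n) ≤ (L + δ) * ENNReal.ofReal (εs n) := by
    intro n
    have h1 : μ (D n) / ENNReal.ofReal (εs n) ≤ L + δ := by
      rw [hDval n]; exact (hfεs n).le
    rw [ENNReal.div_le_iff_le_mul (Or.inl (ENNReal.ofReal_pos.2 (hεpos n)).ne')
      (Or.inl ENNReal.ofReal_ne_top)] at h1
    exact h1
  set u : ℕ → X → ℝ := fun n => cutoff (εs n) E with hu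
  have hlip : ∀ n, ∃ K : NNReal, LipschitzWith K (u n) := by
    intro n
    refine ⟨⟨(εs n)⁻¹, (inv_pos.2 (hεpos n)).le⟩, LipschitzWith.of_dist_le_mul fun x y => ?_⟩
    rw [Real.dist_eq]
    exact cutoff_lip (hεpos n) E x y
  have hl1bound : ∀ n, (∫⁻ x, ENNReal.ofReal |u n x - E.indicator (fun _ => (1:ℝ)) x| ∂μ)
      ≤ μ (D n) := by
    intro n
    have hpt : ∀ x, ENNReal.ofReal |u n x - E.indicator (fun _ => (1:ℝ)) x|
        ≤ (D n).indicator (fun _ => (1:ℝ≥0∞)) x := by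
      intro x
      by_cases hxE : x ∈ E
      · simp [hu, cutoff_eq_one hxE, indicator_of_mem hxE]
      by_cases hxC : x ∈ cthickening (εs n) E
      · have hxD : x ∈ D n := ⟨hxC, hxE⟩
        rw [indicator_of_mem hxD, indicator_of_notMem hxE, sub_zero]
        have h01 := cutoff_mem (hεpos n) E x
        rw [abs_of_nonneg h01.1]
        exact ENNReal.ofReal_le_one.2 h01.2
      · have hxD : x ∉ D n := fun h => hxC h.1
        have hgt := lt_infDist_of_not_mem_cthickening (hεpos n).le hne hxC
        rw [indicator_of_notMem hxD, indicator_of_notMem hxE, hu]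
        simp [cutoff_eq_zero (hεpos n) hgt]
    calc (∫⁻ x, ENNReal.ofReal |u n x - E.indicator (fun _ => (1:ℝ)) x| ∂μ)
        ≤ ∫⁻ x, (D n).indicator (fun _ => (1:ℝ≥0∞)) x ∂μ := lintegral_mono hpt
      _ = μ (D n) := by rw [lintegral_indicator (hDmeas n) _]; simp
  have hl1 : Filter.Tendsto
      (fun n => ∫⁻ x, ENNReal.ofReal |u n x - E.indicator (fun _ => (1:ℝ)) x| ∂μ)
      atTop (𝓝 0) := by
    have h0 : Tendsto (fun n : ℕ => ENNReal.ofReal (1/((n:ℝ)+1))) atTop (𝓝 0) := by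
      rw [← ENNReal.ofReal_zero]
      exact ENNReal.tendsto_ofReal tendsto_one_div_add_atTop_nhds_zero_nat
    have hb : Tendsto (fun n : ℕ => (L + δ) * ENNReal.ofReal (1/((n:ℝ)+1))) atTop (𝓝 0) := by
      have := ENNReal.Tendsto.const_mul (a := L + δ) h0
        (Or.inr (ENNReal.add_ne_top.2 ⟨hLlt.ne, ENNReal.coe_ne_top⟩))
      simpa using this
    refine tendsto_of_tendsto_of_tendsto_of_le_of_le tendsto_const_nhds hb
      (fun n => zero_le) (fun n => ?_)
    refine (hl1bound n).trans ((hDle n).trans ?_)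
    exact mul_le_mul_right (ENNReal.ofReal_le_ofReal (hεs n).2.le) _
  have hslope : ∀ n, (∫⁻ x, ENNReal.ofReal (slopeAt (u n) x) ∂μ) ≤ L + δ := by
    intro n
    have hpt : ∀ x, ENNReal.ofReal (slopeAt (u n) x)
        ≤ (D n).indicator (fun _ => ENNReal.ofReal (εs n)⁻¹) x := by
      intro x
      by_cases hxE : x ∈ E
      · have hz : slopeAt (u n) x ≤ 0 := by
          refine slopeAt_le_zero_of_const (hE.mem_nhds hxE) (fun y hy => ?_)
          rw [hu]; simp only [cutoff_eq_one hy, cutoff_eq_one hxE]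
        rw [ENNReal.ofReal_eq_zero.2 hz]
        exact zero_le
      by_cases hxC : x ∈ cthickening (εs n) E
      · have hxD : x ∈ D n := ⟨hxC, hxE⟩
        rw [indicator_of_mem hxD]
        exact ENNReal.ofReal_le_ofReal
          (slopeAt_le_of_lip (inv_pos.2 (hεpos n)).le
            (fun a b => cutoff_lip (hεpos n) E a b) x)
      · have hgt := lt_infDist_of_not_mem_cthickening (hεpos n).le hne hxC
        have hopen : IsOpen {y : X | εs n < infDist y E} :=
          isOpen_lt continuous_const (continuous_infDist_pt E)
        have hz : slopeAt (u n) x ≤ 0 := by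
          refine slopeAt_le_zero_of_const (hopen.mem_nhds hgt) (fun y hy => ?_)
          rw [hu]
          simp only [cutoff_eq_zero (hεpos n) hy, cutoff_eq_zero (hεpos n) hgt]
        rw [ENNReal.ofReal_eq_zero.2 hz]
        exact zero_le
    calc (∫⁻ x, ENNReal.ofReal (slopeAt (u n) x) ∂μ)
        ≤ ∫⁻ x, (D n).indicator (fun _ => ENNReal.ofReal (εs n)⁻¹) x ∂μ := lintegral_mono hpt
      _ = ENNReal.ofReal (εs n)⁻¹ * μ (D n) := by
          rw [lintegral_indicator (hDmeas n) _]; simp [mul_comm]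
      _ ≤ ENNReal.ofReal (εs n)⁻¹ * ((L + δ) * ENNReal.ofReal (εs n)) :=
          mul_le_mul_right (hDle n) _
      _ = L + δ := by
          rw [ENNReal.ofReal_inv_of_pos (hεpos n), ← mul_assoc, mul_comm _ (L+δ), mul_assoc,
            ENNReal.inv_mul_cancel (ENNReal.ofReal_pos.2 (hεpos n)).ne'
              ENNReal.ofReal_ne_top, mul_one]
  refine le_trans (sInf_le ⟨u, hlip, hl1, rfl⟩) ?_
  exact liminf_le_of_frequently_le' (Frequently.of_forall hslope)
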